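/- For every w ∈ W there exists Q ∈ W such that σ²(Q) − Q = w and such that Q, 1 − Q and Q − σ(Q) all lie in W^×. -/

import Mathlib

noncomputable section

open Pointwise

/-- `k`, an algebraic closure of the field `𝔽_p` with `p` elements. -/
abbrev Kbar (p : ℕ) [Fact p.Prime] : Type _ := AlgebraicClosure (ZMod p)

/-- `W = W(k)`, the ring of Witt vectors with coefficients in `k`. -/
abbrev Wt (p : ℕ) [Fact p.Prime] : Type _ := WittVector p (Kbar p)

/-- `σ : W → W`, the Witt vector Frobenius automorphism, lifting the `p`-th power map on `k`. -/
def σW (p : ℕ) [Fact p.Prime] : Wt p ≃+* Wt p := WittVector.frobeniusEquiv p (Kbar p)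

namespace Stmt10Aux

open WittVector Polynomial

variable (p : ℕ) [Fact p.Prime]

/-! ### Polynomial root lemmas in `Kbar p` -/

lemma degree_aspoly (n : ℕ) (hn : 1 < n) (a : Kbar p) :
    (X ^ n - X - C a : (Kbar p)[X]).degree = n := by
  have h1 : (X ^ n - X - C a : (Kbar p)[X]) = X ^ n - (X + C a) := by ring
  rw [h1, Polynomial.degree_sub_eq_left_of_degree_lt, degree_X_pow]
  rw [degree_X_pow, degree_X_add_C]
  exact_mod_cast hn

lemma exists_root (n : ℕ) (hn : 1 < n) (a : Kbar p) : ∃ c : Kbar p, c ^ n - c = a := by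
  obtain ⟨c, hc⟩ := IsAlgClosed.exists_root (X ^ n - X - C a : (Kbar p)[X]) (by
    rw [degree_aspoly p n hn a]
    exact_mod_cast (by omega : n ≠ 0))
  refine ⟨c, ?_⟩
  have : c ^ n - c - a = 0 := by simpa [Polynomial.IsRoot] using hc
  linear_combination this

lemma separable_aspoly (m : ℕ) (hm : 0 < m) (a : Kbar p) :
    (X ^ (p ^ m) - X - C a : (Kbar p)[X]).Separable := by
  have hd : derivative (X ^ (p ^ m) - X - C a : (Kbar p)[X]) = -1 := by
    have hpow : (p ^ m : Kbar p) = 0 := by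
      have : (p : Kbar p) = 0 := CharP.cast_eq_zero (Kbar p) p
      rw [← Nat.cast_pow]
      push_cast
      rw [this]
      exact zero_pow hm.ne'
    simp [derivative_X_pow, hpow]
    omega
  rw [Polynomial.Separable, hd]
  exact ⟨0, -1, by ring⟩

lemma exists_good_root (a : Kbar p) :
    ∃ q : Kbar p, q ^ (p ^ 2) - q = a ∧ q ^ p ≠ q := by
  have hp2 : (2 : ℕ) ≤ p := (Fact.out (p := p.Prime)).two_le
  have hlt : 1 < p ^ 2 := by nlinarith
  set f : (Kbar p)[X] := X ^ (p ^ 2) - X - C a with hf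
  have hdeg : f.degree = (p ^ 2 : ℕ) := degree_aspoly p _ hlt a
  classical
  have hnd : f.natDegree = p ^ 2 := natDegree_eq_of_degree_eq_some hdeg
  have hf0 : f ≠ 0 := by
    intro h
    rw [h, Polynomial.natDegree_zero] at hnd
    nlinarith
  have hsplits : f.Splits := IsAlgClosed.splits f
  have hcard : Multiset.card f.roots = p ^ 2 := by
    rw [Polynomial.splits_iff_card_roots.mp hsplits, hnd]
  have hnodup : f.roots.Nodup := nodup_roots (separable_aspoly p 2 (by norm_num) a)
  by_contra hcon
  push_neg at hcon
  -- every root of `f` is a root of `g = X ^ p - X`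
  set g : (Kbar p)[X] := X ^ p - X - C (0 : Kbar p) with hg
  have hgdeg : g.degree = (p : ℕ) := degree_aspoly p _ (by omega) 0
  have hgnd : g.natDegree = p := natDegree_eq_of_degree_eq_some hgdeg
  have hsub : f.roots.toFinset ⊆ g.roots.toFinset := by
    intro q hq
    rw [Multiset.mem_toFinset, Polynomial.mem_roots hf0] at hq
    have hroot : q ^ (p ^ 2) - q = a := by
      have : q ^ (p ^ 2) - q - a = 0 := by simpa [hf, Polynomial.IsRoot] using hq
      linear_combination this
    have hqp : q ^ p = q := hcon q hroot
    rw [Multiset.mem_toFinset, Polynomial.mem_roots (by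
      intro h
      rw [h, Polynomial.natDegree_zero] at hgnd
      omega)]
    simp [hg, Polynomial.IsRoot, hqp]
  have h1 : f.roots.toFinset.card = p ^ 2 := by
    rw [Multiset.toFinset_card_of_nodup hnodup, hcard]
  have h2 : g.roots.toFinset.card ≤ p := by
    refine le_trans (Multiset.toFinset_card_le _) ?_
    exact le_trans (Polynomial.card_roots' g) (le_of_eq hgnd)
  have := Finset.card_le_card hsub
  rw [h1] at this
  nlinarith [le_trans this h2]

/-! ### Witt vector lemmas -/

/-- The Witt vector whose 0th coefficient is `c` and whose other coefficients vanish. -/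
def mkc (c : Kbar p) : Wt p := WittVector.mk p (fun i => if i = 0 then c else 0)

lemma coeff_mkc (c : Kbar p) (i : ℕ) : (mkc p c).coeff i = if i = 0 then c else 0 := rfl

lemma coeff_Vit (c : Kbar p) (m i : ℕ) :
    (verschiebung^[m] (mkc p c)).coeff i = if i = m then c else 0 := by
  induction m generalizing i with
  | zero => simp [coeff_mkc]
  | succ m ih =>
    rw [Function.iterate_succ_apply']
    cases i with
    | zero => rw [verschiebung_coeff_zero]; simp
    | succ j =>
      rw [verschiebung_coeff_succ, ih]
      simp [Nat.succ_inj]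

lemma frob_Vit (c : Kbar p) (m : ℕ) :
    WittVector.frobenius (verschiebung^[m] (mkc p c)) = verschiebung^[m] (mkc p (c ^ p)) := by
  have hp0 : p ≠ 0 := (Fact.out (p := p.Prime)).ne_zero
  ext i
  rw [coeff_frobenius_charP, coeff_Vit, coeff_Vit]
  split_ifs with h
  · rfl
  · exact zero_pow hp0

lemma coeff_Vit_lt (x : Wt p) (m j : ℕ) (h : j < m) :
    (verschiebung^[m] x).coeff j = 0 := by
  induction m generalizing j with
  | zero => omega
  | succ m ih =>
    rw [Function.iterate_succ_apply']
    cases j with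
    | zero => exact verschiebung_coeff_zero _
    | succ jj => rw [verschiebung_coeff_succ]; exact ih jj (by omega)

lemma truncate_Vit (x : Wt p) (m n : ℕ) (h : n ≤ m) :
    WittVector.truncate n (verschiebung^[m] x) = 0 := by
  ext i
  rw [WittVector.coeff_truncate, coeff_Vit_lt p x m i (lt_of_lt_of_le i.2 h)]
  simp

lemma Vit_add (m : ℕ) (x y : Wt p) :
    verschiebung^[m] (x + y) = verschiebung^[m] x + verschiebung^[m] y := by
  induction m with
  | zero => simp
  | succ m ih => rw [Function.iterate_succ_apply', Function.iterate_succ_apply',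
      Function.iterate_succ_apply', ih, map_add]

lemma Vit_sub (m : ℕ) (x y : Wt p) :
    verschiebung^[m] (x - y) = verschiebung^[m] x - verschiebung^[m] y := by
  induction m with
  | zero => simp
  | succ m ih => rw [Function.iterate_succ_apply', Function.iterate_succ_apply',
      Function.iterate_succ_apply', ih, map_sub]

lemma constCoeff_mkc (c : Kbar p) : WittVector.constantCoeff (mkc p c) = c := rfl

/-! ### The recursion -/

lemma base (w : Wt p) : ∃ Q r : Wt p,
    (w + Q - WittVector.frobenius (WittVector.frobenius Q) = verschiebung^[1] r) ∧
      Q.coeff 0 ^ p ≠ Q.coeff 0 := by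
  obtain ⟨q, hq, hq'⟩ := exists_good_root p (w.coeff 0)
  set Q : Wt p := mkc p q with hQ
  have hF : WittVector.frobenius (WittVector.frobenius Q) = mkc p ((q ^ p) ^ p) := by
    have h0 := frob_Vit p q 0
    have h1 := frob_Vit p (q ^ p) 0
    simp only [Function.iterate_zero_apply] at h0 h1
    rw [hQ, h0, h1]
  set s : Wt p := w + Q - mkc p ((q ^ p) ^ p) with hs
  have hs0 : ∀ i < 1, s.coeff i = 0 := by
    intro i hi
    interval_cases i
    have : WittVector.constantCoeff s = 0 := by
      rw [hs, map_sub, map_add]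
      have h1 : WittVector.constantCoeff (mkc p ((q ^ p) ^ p)) = (q ^ p) ^ p :=
        constCoeff_mkc p _
      have h2 : WittVector.constantCoeff Q = q := constCoeff_mkc p q
      have h3 : WittVector.constantCoeff w = w.coeff 0 := rfl
      rw [h1, h2, h3]
      have hpp : (q ^ p) ^ p = q ^ (p ^ 2) := by rw [← pow_mul, pow_two]
      rw [hpp]
      linear_combination -hq
    exact this
  refine ⟨Q, (s.shift 1), ?_, ?_⟩
  · calc w + Q - WittVector.frobenius (WittVector.frobenius Q) = s := by rw [hs, hF]
      _ = verschiebung^[1] (s.shift 1) := WittVector.eq_iterate_verschiebung hs0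
  · simpa [hQ, coeff_mkc] using hq'

lemma step (w : Wt p) (n : ℕ) (Q r : Wt p)
    (h : w + Q - WittVector.frobenius (WittVector.frobenius Q) = verschiebung^[n + 1] r) :
    ∃ Q' r' : Wt p,
      (w + Q' - WittVector.frobenius (WittVector.frobenius Q') = verschiebung^[n + 2] r') ∧
        ∀ i ≤ n, Q'.coeff i = Q.coeff i := by
  obtain ⟨c, hc⟩ := exists_root p (p ^ 2) (by nlinarith [(Fact.out (p := p.Prime)).two_le]) (r.coeff 0)
  set D : Wt p := verschiebung^[n + 1] (mkc p c) with hD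
  have hFD : WittVector.frobenius (WittVector.frobenius D) =
      verschiebung^[n + 1] (mkc p ((c ^ p) ^ p)) := by
    rw [hD, frob_Vit, frob_Vit]
  set s : Wt p := r + (mkc p c - mkc p ((c ^ p) ^ p)) with hs
  have hsum : w + (Q + D) - WittVector.frobenius (WittVector.frobenius (Q + D)) =
      verschiebung^[n + 1] s := by
    have expand : w + (Q + D) - WittVector.frobenius (WittVector.frobenius (Q + D)) =
        (w + Q - WittVector.frobenius (WittVector.frobenius Q)) +
          (D - WittVector.frobenius (WittVector.frobenius D)) := by
      rw [map_add, map_add]; ring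
    rw [expand, h, hFD, hD, hs, Vit_add, Vit_sub]
  have hs0 : ∀ i < 1, s.coeff i = 0 := by
    intro i hi
    interval_cases i
    have : WittVector.constantCoeff s = 0 := by
      rw [hs, map_add, map_sub]
      have h1 : WittVector.constantCoeff (mkc p c) = c := constCoeff_mkc p c
      have h2 : WittVector.constantCoeff (mkc p ((c ^ p) ^ p)) = (c ^ p) ^ p :=
        constCoeff_mkc p _
      have hr0 : WittVector.constantCoeff r = r.coeff 0 := rfl
      rw [h1, h2, hr0]
      have hpp : (c ^ p) ^ p = c ^ (p ^ 2) := by rw [← pow_mul, pow_two]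
      rw [hpp]
      linear_combination -hc
    exact this
  refine ⟨Q + D, s.shift 1, ?_, ?_⟩
  · calc w + (Q + D) - WittVector.frobenius (WittVector.frobenius (Q + D))
        = verschiebung^[n + 1] s := hsum
      _ = verschiebung^[n + 1] (verschiebung^[1] (s.shift 1)) := by
          rw [← WittVector.eq_iterate_verschiebung hs0]
      _ = verschiebung^[n + 2] (s.shift 1) := by
          rw [← Function.iterate_add_apply]
  · intro i hi
    have ht : WittVector.truncate (n + 1) (Q + D) = WittVector.truncate (n + 1) Q := by
      rw [map_add, hD, truncate_Vit p _ (n + 1) (n + 1) le_rfl, add_zero]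
    have := congrArg (fun t => TruncatedWittVector.coeff ⟨i, by omega⟩ t) ht
    simpa only [WittVector.coeff_truncate] using this

/-- Approximations: pairs `(Q, r)` with `w + Q - σ²(Q) = V^[n+1] r`. -/
def Approx (w : Wt p) (n : ℕ) : Type _ :=
  {Qr : Wt p × Wt p //
    w + Qr.1 - WittVector.frobenius (WittVector.frobenius Qr.1) = verschiebung^[n + 1] Qr.2}

/-- Base case of the approximation sequence. -/
def baseA (w : Wt p) : {a : Approx p w 0 // a.1.1.coeff 0 ^ p ≠ a.1.1.coeff 0} :=
  let h := base p w
  ⟨⟨⟨Classical.choose h, Classical.choose (Classical.choose_spec h)⟩,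
      (Classical.choose_spec (Classical.choose_spec h)).1⟩,
    (Classical.choose_spec (Classical.choose_spec h)).2⟩

/-- Inductive step of the approximation sequence. -/
def stepA (w : Wt p) (n : ℕ) (a : Approx p w n) :
    {b : Approx p w (n + 1) // ∀ i ≤ n, b.1.1.coeff i = a.1.1.coeff i} :=
  let h := step p w n a.1.1 a.1.2 a.2
  ⟨⟨⟨Classical.choose h, Classical.choose (Classical.choose_spec h)⟩,
      (Classical.choose_spec (Classical.choose_spec h)).1⟩,
    (Classical.choose_spec (Classical.choose_spec h)).2⟩

/-- The approximation sequence. -/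
def seq (w : Wt p) : ∀ n : ℕ, Approx p w n
  | 0 => (baseA p w).1
  | n + 1 => (stepA p w n (seq w n)).1

lemma seq_coeff_stable (w : Wt p) (n : ℕ) :
    ∀ i ≤ n, (seq p w (n + 1)).1.1.coeff i = (seq p w n).1.1.coeff i :=
  (stepA p w n (seq p w n)).2

lemma seq_coeff_eventually (w : Wt p) (i n m : ℕ) (h : i ≤ n) (h2 : n ≤ m) :
    (seq p w m).1.1.coeff i = (seq p w n).1.1.coeff i := by
  induction m, h2 using Nat.le_induction with
  | base => rfl
  | succ m hm ih => rw [seq_coeff_stable p w m i (le_trans h hm), ih]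

/-- The limit of the approximation sequence. -/
def Qlim (w : Wt p) : Wt p := WittVector.mk p (fun i => (seq p w i).1.1.coeff i)

lemma Qlim_coeff (w : Wt p) (i n : ℕ) (h : i ≤ n) :
    (Qlim p w).coeff i = (seq p w n).1.1.coeff i := by
  have : (Qlim p w).coeff i = (seq p w i).1.1.coeff i := rfl
  rw [this, seq_coeff_eventually p w i i n le_rfl h]

lemma Qlim_spec (w : Wt p) :
    w + Qlim p w - WittVector.frobenius (WittVector.frobenius (Qlim p w)) = 0 := by
  ext i
  rw [WittVector.zero_coeff]
  set Qn := (seq p w (i + 1)).1.1 with hQn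
  have hQ : WittVector.truncate (i + 1) (Qlim p w) = WittVector.truncate (i + 1) Qn := by
    ext j
    rw [WittVector.coeff_truncate, WittVector.coeff_truncate]
    exact Qlim_coeff p w j (i + 1) (le_of_lt j.2)
  have hF : WittVector.truncate (i + 1)
        (WittVector.frobenius (WittVector.frobenius (Qlim p w))) =
      WittVector.truncate (i + 1) (WittVector.frobenius (WittVector.frobenius Qn)) := by
    ext j
    rw [WittVector.coeff_truncate, WittVector.coeff_truncate, coeff_frobenius_charP,
      coeff_frobenius_charP, coeff_frobenius_charP, coeff_frobenius_charP,
      Qlim_coeff p w j (i + 1) (le_of_lt j.2)]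
  have key : WittVector.truncate (i + 1)
      (w + Qlim p w - WittVector.frobenius (WittVector.frobenius (Qlim p w))) = 0 := by
    rw [map_sub, map_add, hQ, hF, ← map_add, ← map_sub, (seq p w (i + 1)).2,
      truncate_Vit p _ (i + 2) (i + 1) (by omega)]
  have := congrArg (fun t => TruncatedWittVector.coeff ⟨i, by omega⟩ t) key
  simpa only [WittVector.coeff_truncate, TruncatedWittVector.coeff_zero] using this

lemma main (w : Wt p) : ∃ Q : Wt p,
    WittVector.frobenius (WittVector.frobenius Q) - Q = w ∧ Q.coeff 0 ^ p ≠ Q.coeff 0 := by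
  refine ⟨Qlim p w, ?_, ?_⟩
  · have h := Qlim_spec p w
    linear_combination -h
  · have h0 : (Qlim p w).coeff 0 = (seq p w 0).1.1.coeff 0 := Qlim_coeff p w 0 0 le_rfl
    have : (seq p w 0).1.1.coeff 0 ^ p ≠ (seq p w 0).1.1.coeff 0 := (baseA p w).2
    rw [h0]
    exact this

end Stmt10Aux

/-- For every `w ∈ W` there exists `Q ∈ W` with `σ²(Q) − Q = w` such that
`Q`, `1 − Q` and `Q − σ(Q)` all lie in `W^×`. -/
theorem statement10 (p : ℕ) [Fact p.Prime] (hp : Odd p) (w : Wt p) :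
    ∃ Q : Wt p, σW p (σW p Q) - Q = w ∧
      IsUnit Q ∧ IsUnit (1 - Q) ∧ IsUnit (Q - σW p Q) := by
  obtain ⟨Q, hQ, hq⟩ := Stmt10Aux.main p w
  have hσ : ∀ x : Wt p, σW p x = WittVector.frobenius x := fun x => by
    simp [σW, WittVector.frobeniusEquiv_apply]
  have hq0 : Q.coeff 0 ≠ 0 := by
    intro h
    apply hq
    rw [h, zero_pow (Fact.out (p := p.Prime)).ne_zero]
  refine ⟨Q, by rw [hσ, hσ]; exact hQ, ?_, ?_, ?_⟩
  · exact WittVector.isUnit_of_coeff_zero_ne_zero Q hq0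
  · apply WittVector.isUnit_of_coeff_zero_ne_zero
    have h1 : ((1 : Wt p) - Q).coeff 0 = 1 - Q.coeff 0 := by
      have : WittVector.constantCoeff ((1 : Wt p) - Q) = 1 - Q.coeff 0 := by
        rw [map_sub, map_one]; rfl
      exact this
    rw [h1]
    intro h
    apply hq
    have : Q.coeff 0 = 1 := by linear_combination -h
    rw [this, one_pow]
  · apply WittVector.isUnit_of_coeff_zero_ne_zero
    have h1 : (Q - σW p Q).coeff 0 = Q.coeff 0 - Q.coeff 0 ^ p := by
      have : WittVector.constantCoeff (Q - σW p Q) =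
          WittVector.constantCoeff Q - WittVector.constantCoeff (σW p Q) := map_sub _ _ _
      rw [hσ] at this
      have h2 : WittVector.constantCoeff (WittVector.frobenius Q) = Q.coeff 0 ^ p := by
        show (WittVector.frobenius Q).coeff 0 = Q.coeff 0 ^ p
        rw [WittVector.coeff_frobenius_charP]
      rw [h2] at this
      exact this
    rw [h1]
    intro h
    apply hq
    have : Q.coeff 0 ^ p = Q.coeff 0 := by linear_combination -h
    exact this
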